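/- Let ψ : ℝ^{α+2} → ℝ and φ : ℝ^{β+2} → ℝ be c-Lipschitz for the sup metric. For l = 1, 2 let (x_l(i,j), y_l(i,j)) be the state dynamics for (ψ, φ) with initial data (x_i(l))_i, (y^j(l))_j, and suppose I ≥ 0 satisfies |x_i(1) − x_i(2)| ≤ I and |y^j(1) − y^j(2)| ≤ I for all i, j. Then for all i, j ≥ 0: |x_1(i,j+1) − x_2(i,j+1)| ≤ c̃^{i+1+j(γ+1)}·I and |y_1(i+1,j) − y_2(i+1,j)| ≤ c̃^{i+1+j(γ+1)}·I. -/
import Mathlib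


/-- initial value dependence for the state dynamics of a `c`-Lipschitz
pair `(ψ, φ)`: if the initial data differ by at most `I`, then the orbits differ by
at most `c̃^{i+1+j(γ+1)} · I`, where `γ = max α β` and `c̃ = max c 1`. -/
theorem statement8 (α β : ℕ) (c : ℝ) (hc : 0 ≤ c)
    (ψ : (Fin (α + 2) → ℝ) → ℝ) (φ : (Fin (β + 2) → ℝ) → ℝ)
    (hψ : ∀ v w : Fin (α + 2) → ℝ, |ψ v - ψ w| ≤ c * dist v w)
    (hφ : ∀ v w : Fin (β + 2) → ℝ, |φ v - φ w| ≤ c * dist v w)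
    (x01 y01 x02 y02 : ℕ → ℝ) (x1 y1 x2 y2 : ℕ → ℕ → ℝ)
    (hx01 : ∀ i, x1 i 0 = x01 i) (hy01 : ∀ j, y1 0 j = y01 j)
    (hx1 : ∀ i j, x1 i (j + 1) = ψ (Fin.cons (y1 i j) (fun k : Fin (α + 1) => x1 (i + (k : ℕ)) j)))
    (hy1 : ∀ i j, y1 (i + 1) j = φ (Fin.cons (y1 i j) (fun k : Fin (β + 1) => x1 (i + (k : ℕ)) j)))
    (hx02 : ∀ i, x2 i 0 = x02 i) (hy02 : ∀ j, y2 0 j = y02 j)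
    (hx2 : ∀ i j, x2 i (j + 1) = ψ (Fin.cons (y2 i j) (fun k : Fin (α + 1) => x2 (i + (k : ℕ)) j)))
    (hy2 : ∀ i j, y2 (i + 1) j = φ (Fin.cons (y2 i j) (fun k : Fin (β + 1) => x2 (i + (k : ℕ)) j)))
    (I : ℝ) (hI : 0 ≤ I)
    (hIx : ∀ i, |x01 i - x02 i| ≤ I) (hIy : ∀ j, |y01 j - y02 j| ≤ I) :
    ∀ i j : ℕ,
      |x1 i (j + 1) - x2 i (j + 1)| ≤ (max c 1) ^ (i + 1 + j * (max α β + 1)) * I ∧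
      |y1 (i + 1) j - y2 (i + 1) j| ≤ (max c 1) ^ (i + 1 + j * (max α β + 1)) * I := by
  set γ := max α β with hγ
  set C := max c 1 with hCdef
  have hC1 : (1:ℝ) ≤ C := le_max_right c 1
  have hC0 : (0:ℝ) ≤ C := le_trans zero_le_one hC1
  have mono : ∀ {e e' : ℕ}, e ≤ e' → C ^ e * I ≤ C ^ e' * I := fun h =>
    mul_le_mul_of_nonneg_right (pow_le_pow_right₀ hC1 h) hI
  have baseI : ∀ e : ℕ, I ≤ C ^ e * I := by
    intro e
    have h1 : (1:ℝ) ≤ C ^ e := by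
      have := pow_le_pow_right₀ hC1 (Nat.zero_le e)
      simpa using this
    nlinarith
  have hx0 : ∀ i, |x1 i 0 - x2 i 0| ≤ I := by
    intro i; rw [hx01, hx02]; exact hIx i
  have hy0 : ∀ j, |y1 0 j - y2 0 j| ≤ I := by
    intro j; rw [hy01, hy02]; exact hIy j
  -- generic Lipschitz step
  have comp : ∀ (n : ℕ) (f : (Fin (n + 2) → ℝ) → ℝ),
      (∀ v w, |f v - f w| ≤ c * dist v w) →
      ∀ (a b : ℝ) (g h : Fin (n + 1) → ℝ) (e : ℕ),
        |a - b| ≤ C ^ e * I → (∀ k, |g k - h k| ≤ C ^ e * I) →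
        |f (Fin.cons a g) - f (Fin.cons b h)| ≤ C ^ (e + 1) * I := by
    intro n f hf a b g h e ha hg
    have hM : (0:ℝ) ≤ C ^ e * I := mul_nonneg (pow_nonneg hC0 e) hI
    have hd : dist (Fin.cons a g : Fin (n + 2) → ℝ) (Fin.cons b h) ≤ C ^ e * I := by
      rw [dist_pi_le_iff hM]
      intro k
      refine Fin.cases ?_ ?_ k
      · simpa [Real.dist_eq] using ha
      · intro k'; simpa [Real.dist_eq] using hg k'
    calc |f (Fin.cons a g) - f (Fin.cons b h)| ≤ c * dist (Fin.cons a g : Fin (n + 2) → ℝ) (Fin.cons b h) := hf _ _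
      _ ≤ C * (C ^ e * I) := mul_le_mul (le_max_left c 1) hd dist_nonneg hC0
      _ = C ^ (e + 1) * I := by ring
  -- one level advance
  have stepj : ∀ j : ℕ,
      (∀ m k : ℕ, k ≤ γ → |x1 (m + k) j - x2 (m + k) j| ≤ C ^ (m + j * (γ + 1)) * I) →
      (∀ i, |x1 i (j + 1) - x2 i (j + 1)| ≤ C ^ (i + 1 + j * (γ + 1)) * I) ∧
      (∀ i, |y1 (i + 1) j - y2 (i + 1) j| ≤ C ^ (i + 1 + j * (γ + 1)) * I) := by
    intro j hxl
    have hy : ∀ i, |y1 (i + 1) j - y2 (i + 1) j| ≤ C ^ (i + 1 + j * (γ + 1)) * I := by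
      intro i
      induction i with
      | zero =>
        rw [hy1 0 j, hy2 0 j]
        have h1 : |y1 0 j - y2 0 j| ≤ C ^ (0 + j * (γ + 1)) * I := le_trans (hy0 j) (baseI _)
        have h2 : ∀ k : Fin (β + 1), |x1 (0 + (k:ℕ)) j - x2 (0 + (k:ℕ)) j| ≤ C ^ (0 + j * (γ + 1)) * I := by
          intro k
          exact hxl 0 k (le_trans (Nat.le_of_lt_succ k.isLt) (le_max_right α β))
        refine le_trans (comp β φ hφ _ _ _ _ _ h1 h2) (mono (Nat.le_of_eq (by ring)))
      | succ i ihi =>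
        rw [hy1 (i + 1) j, hy2 (i + 1) j]
        have h1 : |y1 (i + 1) j - y2 (i + 1) j| ≤ C ^ (i + 1 + j * (γ + 1)) * I := ihi
        have h2 : ∀ k : Fin (β + 1), |x1 (i + 1 + (k:ℕ)) j - x2 (i + 1 + (k:ℕ)) j| ≤ C ^ (i + 1 + j * (γ + 1)) * I := by
          intro k
          have := hxl (i + 1) k (le_trans (Nat.le_of_lt_succ k.isLt) (le_max_right α β))
          exact le_trans this (mono (Nat.le_of_eq (by ring)))
        refine le_trans (comp β φ hφ _ _ _ _ _ h1 h2) (mono (Nat.le_of_eq (by ring)))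
    refine ⟨?_, hy⟩
    intro i
    rw [hx1 i j, hx2 i j]
    have hyl : ∀ m : ℕ, |y1 m j - y2 m j| ≤ C ^ (m + j * (γ + 1)) * I := by
      intro m
      cases m with
      | zero => exact le_trans (hy0 j) (baseI _)
      | succ m => exact hy m
    have h2 : ∀ k : Fin (α + 1), |x1 (i + (k:ℕ)) j - x2 (i + (k:ℕ)) j| ≤ C ^ (i + j * (γ + 1)) * I := by
      intro k
      exact hxl i k (le_trans (Nat.le_of_lt_succ k.isLt) (le_max_left α β))
    refine le_trans (comp α ψ hψ _ _ _ _ _ (hyl i) h2) (mono (Nat.le_of_eq (by ring)))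
  have key : ∀ j : ℕ,
      (∀ i, |x1 i (j + 1) - x2 i (j + 1)| ≤ C ^ (i + 1 + j * (γ + 1)) * I) ∧
      (∀ i, |y1 (i + 1) j - y2 (i + 1) j| ≤ C ^ (i + 1 + j * (γ + 1)) * I) := by
    intro j
    induction j with
    | zero =>
      refine stepj 0 ?_
      intro m k hk
      exact le_trans (hx0 (m + k)) (baseI _)
    | succ j ih =>
      refine stepj (j + 1) ?_
      intro m k hk
      have h := ih.1 (m + k)
      refine le_trans h (mono ?_)
      have hk1 : k + 1 ≤ γ + 1 := Nat.succ_le_succ hk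
      calc m + k + 1 + j * (γ + 1) = m + j * (γ + 1) + (k + 1) := by ring
        _ ≤ m + j * (γ + 1) + (γ + 1) := Nat.add_le_add_left hk1 _
        _ = m + (j + 1) * (γ + 1) := by ring
  intro i j
  exact ⟨(key j).1 i, (key j).2 i⟩
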